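/- Let k, r ≥ 2 and let s_1, …, s_k be distinct unit vectors in R^d (d ≥ 1) whose linear span is all of R^d. Then there exists a constant β₁ > 0, depending only on {s_1,…,s_k} and r, such that for every nonzero w ∈ R^d and every θ with 0 < sin θ < β₁, the linear span of {g(x) : x ∈ W_θ} is a proper subspace of R^d (i.e. W_θ has codimension at least 1). -/

import Mathlib

attribute [local instance] Classical.propDecidable

open scoped RealInnerProductSpace

/-- The defining condition of the space `X` of swaps: `x ∈ ℤ^k` with all `|x i| ≤ 2r-2`,
`∑ x i = 0` and `∑ |x i| ≤ 4r-4`. -/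
def SwapCond (k r : ℕ) (x : Fin k → ℤ) : Prop :=
  (∀ i, |x i| ≤ 2 * (r : ℤ) - 2) ∧ (∑ i, x i = 0) ∧ (∑ i, |x i| ≤ 4 * (r : ℤ) - 4)

/-- `g x = ∑ i, x i • s i`. -/
noncomputable def gMap {k d : ℕ} (s : Fin k → EuclideanSpace ℝ (Fin d))
    (x : Fin k → ℤ) : EuclideanSpace ℝ (Fin d) :=
  ∑ i, (x i : ℝ) • s i

/-- The sine of the angle `θ(x)` between `g x` and the hyperplane `w^⊥`
(`0` by convention when `g x = 0`, matching division-by-zero conventions). -/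
noncomputable def sinAngle {k d : ℕ} (s : Fin k → EuclideanSpace ℝ (Fin d))
    (w : EuclideanSpace ℝ (Fin d)) (x : Fin k → ℤ) : ℝ :=
  |⟪gMap s x, w⟫| / (‖gMap s x‖ * ‖w‖)

/-- The constant `β₀ = L / min {‖g x‖ : x ∈ X, g x ≠ 0}`, with `L = 8(r-1)²`. -/
noncomputable def beta0 (k r : ℕ) {d : ℕ} (s : Fin k → EuclideanSpace ℝ (Fin d)) : ℝ :=
  8 * ((r : ℝ) - 1) ^ 2 /
    sInf {t : ℝ | ∃ x, SwapCond k r x ∧ gMap s x ≠ 0 ∧ t = ‖gMap s x‖}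

/-- Auxiliary: sum of absolute inner products with members of a finite set. -/
noncomputable def auxF {d : ℕ} (T : Finset (EuclideanSpace ℝ (Fin d)))
    (w : EuclideanSpace ℝ (Fin d)) : ℝ :=
  ∑ v ∈ T, |⟪v, w⟫|

/-- Auxiliary: infimum of `auxF T` over the unit sphere. -/
noncomputable def auxC {d : ℕ} (T : Finset (EuclideanSpace ℝ (Fin d))) : ℝ :=
  sInf (auxF T '' Metric.sphere (0 : EuclideanSpace ℝ (Fin d)) 1)

/-- Auxiliary: the constant associated to a finite set. -/
noncomputable def auxB {d : ℕ} (T : Finset (EuclideanSpace ℝ (Fin d))) : ℝ :=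
  auxC T / ∑ v ∈ T, ‖v‖

lemma auxF_nonneg {d : ℕ} (T : Finset (EuclideanSpace ℝ (Fin d)))
    (w : EuclideanSpace ℝ (Fin d)) : 0 ≤ auxF T w :=
  Finset.sum_nonneg fun _ _ => abs_nonneg _

lemma auxC_le {d : ℕ} (T : Finset (EuclideanSpace ℝ (Fin d)))
    (w : EuclideanSpace ℝ (Fin d)) (hw : ‖w‖ = 1) : auxC T ≤ auxF T w := by
  apply csInf_le
  · exact ⟨0, by rintro y ⟨u, -, rfl⟩; exact auxF_nonneg T u⟩
  · exact ⟨w, by simpa [mem_sphere_zero_iff_norm] using hw, rfl⟩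

lemma auxC_pos {d : ℕ} (hd : 1 ≤ d) (T : Finset (EuclideanSpace ℝ (Fin d)))
    (hspan : Submodule.span ℝ (T : Set (EuclideanSpace ℝ (Fin d))) = ⊤) :
    0 < auxC T := by
  have hsne : (Metric.sphere (0 : EuclideanSpace ℝ (Fin d)) 1).Nonempty := by
    refine ⟨EuclideanSpace.single ⟨0, hd⟩ (1 : ℝ), ?_⟩
    rw [mem_sphere_zero_iff_norm, EuclideanSpace.norm_single]
    simp
  have hfc : Continuous (auxF T) :=
    continuous_finset_sum _ fun v _ => (Continuous.inner continuous_const continuous_id).abs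
  obtain ⟨w₀, hw₀mem, hw₀min⟩ :=
    (isCompact_sphere (0 : EuclideanSpace ℝ (Fin d)) 1).exists_isMinOn hsne hfc.continuousOn
  have hw₀norm : ‖w₀‖ = 1 := mem_sphere_zero_iff_norm.mp hw₀mem
  have hge : auxF T w₀ ≤ auxC T := by
    refine le_csInf ⟨auxF T w₀, ⟨w₀, hw₀mem, rfl⟩⟩ ?_
    rintro y ⟨u, hu, rfl⟩
    exact (isMinOn_iff.mp hw₀min) u hu
  have hfpos : 0 < auxF T w₀ := by
    rcases (auxF_nonneg T w₀).lt_or_eq with h | h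
    · exact h
    · exfalso
      have hall : ∀ v ∈ T, ⟪v, w₀⟫ = 0 := by
        intro v hv
        have := (Finset.sum_eq_zero_iff_of_nonneg fun v _ => abs_nonneg _).mp h.symm v hv
        exact abs_eq_zero.mp this
      have hspan0 : ∀ u ∈ Submodule.span ℝ (T : Set (EuclideanSpace ℝ (Fin d))),
          ⟪u, w₀⟫ = 0 := by
        intro u hu
        induction hu using Submodule.span_induction with
        | mem v hv => exact hall v hv
        | zero => simp
        | add a b _ _ ha hb => rw [inner_add_left, ha, hb]; ring
        | smul c a _ ha => rw [real_inner_smul_left, ha]; ring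
      have hw0 : w₀ = 0 := by
        have := hspan0 w₀ (by rw [hspan]; exact Submodule.mem_top)
        exact inner_self_eq_zero.mp this
      rw [hw0, norm_zero] at hw₀norm
      exact one_ne_zero hw₀norm.symm
  linarith

theorem W_theta_proper_subspace (k r d : ℕ) (hk : 2 ≤ k) (hr : 2 ≤ r) (hd : 1 ≤ d)
    (s : Fin k → EuclideanSpace ℝ (Fin d)) (hs : ∀ i, ‖s i‖ = 1)
    (hinj : Function.Injective s)
    (hspan : Submodule.span ℝ (Set.range s) = ⊤) :
    ∃ β₁ : ℝ, 0 < β₁ ∧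
      ∀ w : EuclideanSpace ℝ (Fin d), w ≠ 0 →
        ∀ θ : ℝ, 0 < θ → θ ≤ Real.pi / 2 → Real.sin θ < β₁ →
          Submodule.span ℝ
            {v : EuclideanSpace ℝ (Fin d) |
              ∃ x, SwapCond k r x ∧ sinAngle s w x < Real.sin θ ∧ v = gMap s x} ≠ ⊤ := by
  classical
  -- the set of swaps is finite
  have hXfin : {x : Fin k → ℤ | SwapCond k r x}.Finite := by
    apply Set.Finite.subset
      (Set.Finite.pi fun i : Fin k => Set.finite_Icc (-(2 * (r : ℤ) - 2)) (2 * (r : ℤ) - 2))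
    intro x hx
    simp only [Set.mem_pi, Set.mem_univ, Set.mem_Icc, forall_true_left]
    intro i
    exact abs_le.mp (hx.1 i)
  have hG0fin : ((gMap s '' {x | SwapCond k r x}) \ {0} :
      Set (EuclideanSpace ℝ (Fin d))).Finite := (hXfin.image _).diff
  set Gfin : Finset (EuclideanSpace ℝ (Fin d)) := hG0fin.toFinset with hGfin
  set 𝒮 : Finset (Finset (EuclideanSpace ℝ (Fin d))) :=
    Gfin.powerset.filter
      (fun T => Submodule.span ℝ (T : Set (EuclideanSpace ℝ (Fin d))) = ⊤) with h𝒮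
  -- facts about members of 𝒮
  have hTfacts : ∀ T ∈ 𝒮, T.Nonempty ∧ 0 < ∑ v ∈ T, ‖v‖ ∧ 0 < auxC T := by
    intro T hT
    rw [h𝒮, Finset.mem_filter, Finset.mem_powerset] at hT
    obtain ⟨hTsub, hTspan⟩ := hT
    have hvne : ∀ v ∈ T, v ≠ (0 : EuclideanSpace ℝ (Fin d)) := by
      intro v hv hv0
      have := hTsub hv
      rw [hGfin, Set.Finite.mem_toFinset] at this
      exact this.2 (by simp [hv0])
    have hTne : T.Nonempty := by
      rcases T.eq_empty_or_nonempty with h | h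
      · exfalso
        rw [h] at hTspan
        haveI : Nonempty (Fin d) := ⟨⟨0, hd⟩⟩
        simp only [Finset.coe_empty, Submodule.span_empty] at hTspan
        exact absurd hTspan.symm top_ne_bot
      · exact h
    refine ⟨hTne, ?_, auxC_pos hd T hTspan⟩
    exact Finset.sum_pos (fun v hv => norm_pos_iff.mpr (hvne v hv)) hTne
  set B : Finset ℝ := insert 1 (𝒮.image auxB) with hB
  have hBne : B.Nonempty := Finset.insert_nonempty _ _
  refine ⟨B.min' hBne, ?_, ?_⟩
  · have hmem := B.min'_mem hBne
    rcases Finset.mem_insert.mp hmem with h | h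
    · rw [h]; exact one_pos
    · rw [Finset.mem_image] at h
      obtain ⟨T, hT, hEq⟩ := h
      obtain ⟨-, hsum, hc⟩ := hTfacts T hT
      rw [← hEq]
      exact div_pos hc hsum
  · intro w hw θ hθ1 hθ2 hθβ hspanS
    have hwpos : 0 < ‖w‖ := norm_pos_iff.mpr hw
    have hsinθpos : 0 < Real.sin θ :=
      Real.sin_pos_of_pos_of_lt_pi hθ1 (lt_of_le_of_lt hθ2 (by linarith [Real.pi_pos]))
    set S : Set (EuclideanSpace ℝ (Fin d)) :=
      {v | ∃ x, SwapCond k r x ∧ sinAngle s w x < Real.sin θ ∧ v = gMap s x} with hS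
    set T : Finset (EuclideanSpace ℝ (Fin d)) := Gfin.filter (fun v => v ∈ S) with hT
    have hsub : S ⊆ insert (0 : EuclideanSpace ℝ (Fin d)) (T : Set (EuclideanSpace ℝ (Fin d))) := by
      intro v hv
      by_cases hv0 : v = 0
      · exact Set.mem_insert_iff.mpr (Or.inl hv0)
      · refine Set.mem_insert_iff.mpr (Or.inr ?_)
        obtain ⟨x, hx, hsin, hveq⟩ := hv
        have hvG : v ∈ Gfin := by
          rw [hGfin, Set.Finite.mem_toFinset]
          exact ⟨⟨x, hx, hveq.symm⟩, by simp [hv0]⟩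
        simp only [hT, Finset.coe_filter, Set.mem_setOf_eq]
        exact ⟨hvG, ⟨x, hx, hsin, hveq⟩⟩
    have hTspan : Submodule.span ℝ (T : Set (EuclideanSpace ℝ (Fin d))) = ⊤ := by
      rw [eq_top_iff]
      calc (⊤ : Submodule ℝ (EuclideanSpace ℝ (Fin d)))
          = Submodule.span ℝ S := hspanS.symm
        _ ≤ Submodule.span ℝ (insert (0 : EuclideanSpace ℝ (Fin d))
              (T : Set (EuclideanSpace ℝ (Fin d)))) := Submodule.span_mono hsub
        _ = Submodule.span ℝ (T : Set (EuclideanSpace ℝ (Fin d))) :=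
              Submodule.span_insert_zero
    have hT𝒮 : T ∈ 𝒮 := by
      rw [h𝒮, Finset.mem_filter, Finset.mem_powerset]
      exact ⟨Finset.filter_subset _ _, hTspan⟩
    obtain ⟨hTne, hsum, hcpos⟩ := hTfacts T hT𝒮
    have hβ₁le : B.min' hBne ≤ auxB T :=
      Finset.min'_le _ _ (Finset.mem_insert_of_mem (Finset.mem_image_of_mem auxB hT𝒮))
    set u : EuclideanSpace ℝ (Fin d) := ‖w‖⁻¹ • w with hu
    have hunorm : ‖u‖ = 1 := by
      rw [hu, norm_smul, norm_inv, norm_norm, inv_mul_cancel₀ (ne_of_gt hwpos)]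
    have hlt : ∀ v ∈ T, |⟪v, u⟫| < Real.sin θ * ‖v‖ := by
      intro v hv
      rw [hT, Finset.mem_filter] at hv
      obtain ⟨hvG, hvS⟩ := hv
      obtain ⟨x, hx, hsin, hveq⟩ := hvS
      have hvne : v ≠ 0 := by
        rw [hGfin, Set.Finite.mem_toFinset] at hvG
        simpa using hvG.2
      have hvpos : 0 < ‖v‖ := norm_pos_iff.mpr hvne
      unfold sinAngle at hsin
      rw [← hveq] at hsin
      rw [div_lt_iff₀ (by positivity)] at hsin
      rw [hu, real_inner_smul_right, abs_mul, abs_inv, abs_norm]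
      rw [inv_mul_lt_iff₀ hwpos]
      nlinarith
    have hmain : auxC T ≤ auxF T u := auxC_le T u hunorm
    have hsumlt : auxF T u < Real.sin θ * ∑ v ∈ T, ‖v‖ := by
      rw [Finset.mul_sum]
      exact Finset.sum_lt_sum_of_nonempty hTne hlt
    have hfinal : Real.sin θ * ∑ v ∈ T, ‖v‖ < auxC T := by
      have h1 : Real.sin θ < auxB T := lt_of_lt_of_le hθβ hβ₁le
      rw [auxB] at h1
      exact (lt_div_iff₀ hsum).mp h1
    linarith
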